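/- Let α ∈ (0,1) with α ≠ 1/2, β = 1−α, J ⊆ ℝ an open interval, and (F, G) a pair of differentiable functions on J satisfying [F(b)−F(a)]G'(αa+βb) = [G(b)−G(a)]F'(αa+βb) for all a, b ∈ J. If I = (p,q) ⊆ J is an interval on which G' does not vanish, then {1, F, G} are linearly dependent on I. -/

import Mathlib

set_option maxHeartbeats 1000000 in
/-- Proposition 4.1 -/
theorem stmt_10 (J : Set ℝ) (hJo : IsOpen J) (hJc : J.OrdConnected) (hJne : J.Nonempty)
    (α β : ℝ) (hα : α ∈ Set.Ioo (0:ℝ) 1) (hαhalf : α ≠ 1/2) (hβ : β = 1 - α)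
    (F G : ℝ → ℝ)
    (hF : ∀ x ∈ J, DifferentiableAt ℝ F x) (hG : ∀ x ∈ J, DifferentiableAt ℝ G x)
    (heq : ∀ a ∈ J, ∀ b ∈ J,
      (F b - F a) * deriv G (α * a + β * b) = (G b - G a) * deriv F (α * a + β * b))
    (p q : ℝ) (hpq : p < q) (hIJ : Set.Ioo p q ⊆ J)
    (hg : ∀ x ∈ Set.Ioo p q, deriv G x ≠ 0) :
    ∃ c₁ c₂ c₃ : ℝ, (c₁, c₂, c₃) ≠ (0, 0, 0) ∧
      ∀ x ∈ Set.Ioo p q, c₁ * F x + c₂ * G x + c₃ = 0 := by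
  obtain ⟨hα0, hα1⟩ := hα
  subst hβ
  have hd : (2 * α - 1 : ℝ) ≠ 0 := by
    intro e
    apply hαhalf
    linarith
  set I := Set.Ioo p q with hIdef
  have hIccI : ∀ a ∈ I, ∀ b ∈ I, Set.Icc a b ⊆ I := by
    rintro a ⟨ha1, ha2⟩ b ⟨hb1, hb2⟩ x ⟨h1, h2⟩
    exact ⟨lt_of_lt_of_le ha1 h1, lt_of_le_of_lt h2 hb2⟩
  have hmem : ∀ a ∈ I, ∀ b ∈ I, α * a + (1 - α) * b ∈ I := by
    rintro a ⟨ha1, ha2⟩ b ⟨hb1, hb2⟩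
    constructor <;> nlinarith
  -- G is injective on I
  have hGinj : ∀ a ∈ I, ∀ b ∈ I, a ≠ b → G a ≠ G b := by
    have key : ∀ a ∈ I, ∀ b ∈ I, a < b → G a ≠ G b := by
      intro a ha b hb hab hGab
      obtain ⟨w, hw, hw0⟩ := exists_deriv_eq_zero hab
        (fun x hx => (hG x (hIJ (hIccI a ha b hb hx))).continuousAt.continuousWithinAt) hGab
      exact hg w (hIccI a ha b hb ⟨hw.1.le, hw.2.le⟩) hw0
    intro a ha b hb hab
    rcases lt_or_gt_of_ne hab with hlt | hgt
    · exact key a ha b hb hlt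
    · exact fun he => key b hb a ha hgt he.symm
  set h : ℝ → ℝ := fun x => deriv F x / deriv G x with hh
  have hratio : ∀ a ∈ I, ∀ b ∈ I, a ≠ b →
      h (α * a + (1 - α) * b) = (F b - F a) / (G b - G a) := by
    intro a ha b hb hab
    have hm := hmem a ha b hb
    have h1 := heq a (hIJ ha) b (hIJ hb)
    have h2 := hg _ hm
    have h3 : G b - G a ≠ 0 := sub_ne_zero.2 fun e => (hGinj a ha b hb hab) e.symm
    show deriv F (α * a + (1 - α) * b) / deriv G (α * a + (1 - α) * b) = _
    rw [div_eq_div_iff h2 h3]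
    linarith [h1]
  have hswap : ∀ a ∈ I, ∀ b ∈ I, a ≠ b →
      h (α * a + (1 - α) * b) = h (α * b + (1 - α) * a) := by
    intro a ha b hb hab
    rw [hratio a ha b hb hab, hratio b hb a ha hab.symm,
      ← neg_sub (F a) (F b), ← neg_sub (G a) (G b), neg_div_neg_eq]
  -- local constancy of h on I
  set t : ℝ := 1 / (2 * (2 * α - 1)) with ht
  have ht0 : t ≠ 0 := by
    rw [ht]
    exact one_div_ne_zero (by intro e; apply hd; linarith)
  set K : ℝ := 1 / 2 + |t| with hK
  have hK0 : 0 < K := by positivity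
  have hlocal : ∀ x ∈ I, ∃ ε > 0, ∀ y ∈ Metric.ball x ε, y ∈ I ∧ h y = h x := by
    rintro x ⟨hx1, hx2⟩
    set δ : ℝ := min (x - p) (q - x) with hδdef
    have hδ : 0 < δ := lt_min (by linarith) (by linarith)
    have hδ1 : δ ≤ x - p := min_le_left _ _
    have hδ2 : δ ≤ q - x := min_le_right _ _
    refine ⟨δ / (2 * K + 2), by positivity, ?_⟩
    intro y hy
    set ε : ℝ := δ / (2 * K + 2) with hε
    have hεδ : (2 * K + 2) * ε = δ := by
      rw [hε]; field_simp
    have hyx : |y - x| < ε := by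
      rwa [Metric.mem_ball, Real.dist_eq] at hy
    have hyx1 := abs_lt.1 hyx
    have hεpos : 0 < ε := by positivity
    have hyI : y ∈ I := by
      constructor <;> nlinarith
    by_cases hxy : y = x
    · exact ⟨hyI, by rw [hxy]⟩
    set a : ℝ := (x + y) / 2 + (x - y) * t with haa
    set b : ℝ := (x + y) / 2 - (x - y) * t with hbb
    have hta : |t| ≤ K := by rw [hK]; linarith
    have hax : |a - x| ≤ K * |y - x| := by
      have e1 : a - x = (y - x) * (1 / 2 - t) := by rw [haa]; ring
      rw [e1, abs_mul]
      have h2 : |1 / 2 - t| ≤ K := by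
        rw [hK]
        exact abs_le.2 ⟨by linarith [le_abs_self t], by linarith [neg_abs_le t]⟩
      calc |y - x| * |1 / 2 - t| ≤ |y - x| * K := by
            exact mul_le_mul_of_nonneg_left h2 (abs_nonneg _)
        _ = K * |y - x| := by ring
    have hbx : |b - x| ≤ K * |y - x| := by
      have e1 : b - x = (y - x) * (1 / 2 + t) := by rw [hbb]; ring
      rw [e1, abs_mul]
      have h2 : |1 / 2 + t| ≤ K := by
        rw [hK]
        exact abs_le.2 ⟨by linarith [neg_abs_le t], by linarith [le_abs_self t]⟩
      calc |y - x| * |1 / 2 + t| ≤ |y - x| * K := by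
            exact mul_le_mul_of_nonneg_left h2 (abs_nonneg _)
        _ = K * |y - x| := by ring
    have hKεδ : K * ε < δ := by nlinarith
    have haxδ : |a - x| < δ := by
      calc |a - x| ≤ K * |y - x| := hax
        _ < K * ε := by exact mul_lt_mul_of_pos_left hyx hK0
        _ < δ := hKεδ
    have hbxδ : |b - x| < δ := by
      calc |b - x| ≤ K * |y - x| := hbx
        _ < K * ε := by exact mul_lt_mul_of_pos_left hyx hK0
        _ < δ := hKεδ
    have hax1 := abs_lt.1 haxδ
    have hbx1 := abs_lt.1 hbxδ
    have haI : a ∈ I := ⟨by linarith, by linarith⟩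
    have hbI : b ∈ I := ⟨by linarith, by linarith⟩
    have hab : a ≠ b := by
      rw [haa, hbb]
      intro e
      have : (x - y) * t = 0 := by linarith
      rcases mul_eq_zero.1 this with e1 | e1
      · exact hxy (by linarith)
      · exact ht0 e1
    have e1 : α * a + (1 - α) * b = x := by
      rw [haa, hbb, ht]
      field_simp
      have hd2 : (α * 2 - 1) ≠ 0 := by intro e; apply hd; linarith
      field_simp
      ring
    have e2 : α * b + (1 - α) * a = y := by
      rw [haa, hbb, ht]
      field_simp
      have hd2 : (α * 2 - 1) ≠ 0 := by intro e; apply hd; linarith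
      field_simp
      ring
    have := hswap a haI b hbI hab
    rw [e1, e2] at this
    exact ⟨hyI, this.symm⟩
  -- h is constant on I
  set x0 : ℝ := (p + q) / 2 with hx0def
  have hx0 : x0 ∈ I := ⟨by rw [hx0def]; linarith, by rw [hx0def]; linarith⟩
  set c : ℝ := h x0 with hc
  have hconst : ∀ x ∈ I, h x = c := by
    set U : Set ℝ := {x | x ∈ I ∧ h x = c} with hU
    set V : Set ℝ := {x | x ∈ I ∧ h x ≠ c} with hV
    have hUo : IsOpen U := by
      rw [Metric.isOpen_iff]
      rintro x ⟨hxI, hxc⟩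
      obtain ⟨ε, hε, hball⟩ := hlocal x hxI
      exact ⟨ε, hε, fun y hy => ⟨(hball y hy).1, (hball y hy).2.trans hxc⟩⟩
    have hVo : IsOpen V := by
      rw [Metric.isOpen_iff]
      rintro x ⟨hxI, hxc⟩
      obtain ⟨ε, hε, hball⟩ := hlocal x hxI
      exact ⟨ε, hε, fun y hy => ⟨(hball y hy).1, by rw [(hball y hy).2]; exact hxc⟩⟩
    have hdisj : Disjoint U V := Set.disjoint_left.2 fun x hx hx' => hx'.2 hx.2
    have hsub : I ⊆ U ∪ V := by
      intro x hx
      by_cases hcx : h x = c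
      · exact Or.inl ⟨hx, hcx⟩
      · exact Or.inr ⟨hx, hcx⟩
    have hUI : I ⊆ U :=
      (isPreconnected_Ioo).subset_left_of_subset_union hUo hVo hdisj hsub
        ⟨x0, hx0, hx0, rfl⟩
    exact fun x hx => (hUI hx).2
  -- F' = c G' on I
  have hF' : ∀ x ∈ I, deriv F x = c * deriv G x := by
    intro x hx
    have := hconst x hx
    rw [hh] at this
    exact (div_eq_iff (hg x hx)).1 this
  -- F - cG has zero derivative on I
  have hdiff : ∀ x ∈ I, DifferentiableAt ℝ (fun x => F x - c * G x) x :=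
    fun x hx => (hF x (hIJ hx)).sub ((hG x (hIJ hx)).const_mul c)
  have hderiv0 : ∀ x ∈ I, deriv (fun x => F x - c * G x) x = 0 := by
    intro x hx
    rw [deriv_fun_sub (hF x (hIJ hx)) ((hG x (hIJ hx)).const_mul c),
      deriv_const_mul c (hG x (hIJ hx)), hF' x hx]
    ring
  have pair : ∀ u ∈ I, ∀ v ∈ I, u < v → F u - c * G u = F v - c * G v := by
    intro u hu v hv huv
    obtain ⟨w, hw, hsl⟩ := exists_deriv_eq_slope (fun x => F x - c * G x) huv
      (fun z hz => (hdiff z (hIccI u hu v hv hz)).continuousAt.continuousWithinAt)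
      (fun z hz => (hdiff z (hIccI u hu v hv ⟨hz.1.le, hz.2.le⟩)).differentiableWithinAt)
    rw [hderiv0 w (hIccI u hu v hv ⟨hw.1.le, hw.2.le⟩)] at hsl
    have hne : v - u ≠ 0 := by intro e; linarith
    have := hsl.symm
    rw [div_eq_zero_iff] at this
    rcases this with e | e
    · linarith
    · exact absurd e hne
  have hφ : ∀ x ∈ I, F x - c * G x = F x0 - c * G x0 := by
    intro x hx
    rcases lt_trichotomy x x0 with hlt | heq' | hgt
    · exact pair x hx x0 hx0 hlt
    · rw [heq']
    · exact (pair x0 hx0 x hx hgt).symm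
  refine ⟨1, -c, -(F x0 - c * G x0), ?_, ?_⟩
  · intro hcon
    rw [Prod.mk.injEq] at hcon
    exact one_ne_zero hcon.1
  · intro x hx
    have := hφ x hx
    linarith
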